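/- arXiv:2202.13863 — 5 statements merged into one kernel-verified Lean document; each statement's English description precedes it below -/
import Mathlib

section
/- Let g : ℝⁿ → ℝ be differentiable, suppose its supremum g* = sup_z g(z) is finite and the set S = {z : g(z) = g*} of maximizers is nonempty, and suppose g satisfies the μ-PL condition: (1/2)‖∇g(z)‖² ≥ μ(g* − g(z)) for all z ∈ ℝⁿ, with μ > 0. Then g satisfies quadratic growth: for every z ∈ ℝⁿ, g* − g(z) ≥ (μ/2)·dist(z, S)², where dist(z, S) = inf_{z* ∈ S} ‖z − z*‖. -/
open Filter Topology Metric InnerProductSpace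

lemma ekeland_aux {X : Type*} [MetricSpace X] [CompleteSpace X]
    (h : X → ℝ) (hc : Continuous h) (h0 : ∀ x, 0 ≤ h x) (σ : ℝ) (hσ : 0 < σ)
    (hD : ∀ w, 0 < h w → ∃ w', h w' + σ * dist w' w < h w) (z : X) :
    ∃ w, h w = 0 ∧ σ * dist z w ≤ h z := by
  classical
  set r : X → X → Prop := fun y x => h y + σ * dist y x ≤ h x with hr
  have hrefl : ∀ x, r x x := by
    intro x; simp [hr]
  have htrans : ∀ a b c, r a b → r b c → r a c := by
    intro a b c hab hbc
    have htri : dist a c ≤ dist a b + dist b c := dist_triangle a b c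
    have : σ * dist a c ≤ σ * dist a b + σ * dist b c := by nlinarith
    simp only [hr] at *; linarith
  have hAne : ∀ x, {y | r y x}.Nonempty := fun x => ⟨x, hrefl x⟩
  have hbdd : ∀ x, BddBelow (h '' {y | r y x}) := by
    intro x; exact ⟨0, by rintro b ⟨y, _, rfl⟩; exact h0 y⟩
  have step : ∀ x : X, ∀ k : ℕ, ∃ y, r y x ∧ h y ≤ sInf (h '' {y | r y x}) + (1/2)^k := by
    intro x k
    have hlt : sInf (h '' {y | r y x}) < sInf (h '' {y | r y x}) + (1/2)^k := by
      have : (0:ℝ) < (1/2)^k := by positivity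
      linarith
    obtain ⟨b, ⟨y, hy, rfl⟩, hb⟩ := exists_lt_of_csInf_lt ((hAne x).image h) hlt
    exact ⟨y, hy, hb.le⟩
  let x : ℕ → X := fun k => Nat.rec z (fun k xk => Classical.choose (step xk k)) k
  have hx0 : x 0 = z := rfl
  have hxs : ∀ k, r (x (k+1)) (x k) ∧
      h (x (k+1)) ≤ sInf (h '' {y | r y (x k)}) + (1/2)^k :=
    fun k => Classical.choose_spec (step (x k) k)
  have hchain : ∀ k m, k ≤ m → r (x m) (x k) := by
    intro k m hkm
    induction m, hkm using Nat.le_induction with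
    | base => exact hrefl _
    | succ m hkm ih => exact htrans _ _ _ (hxs m).1 ih
  have hanti : Antitone fun k => h (x k) := by
    apply antitone_nat_of_succ_le
    intro k
    have := (hxs k).1
    have hd : 0 ≤ σ * dist (x (k+1)) (x k) := by positivity
    simp only [hr] at this; linarith
  have hbdd2 : BddBelow (Set.range fun k => h (x k)) :=
    ⟨0, by rintro b ⟨k, rfl⟩; exact h0 _⟩
  set L := ⨅ k, h (x k) with hL
  have hLtend : Tendsto (fun k => h (x k)) atTop (𝓝 L) :=
    tendsto_atTop_ciInf hanti hbdd2
  have hLle : ∀ k, L ≤ h (x k) := fun k => ciInf_le hbdd2 k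
  have hcauchy : CauchySeq x := by
    apply cauchySeq_of_le_tendsto_0 (fun N => (h (x N) - L) / σ)
    · intro m k N hm hk
      wlog hmk : k ≤ m generalizing m k
      · rw [dist_comm]; exact this k m hk hm (le_of_not_ge hmk)
      have := hchain k m hmk
      simp only [hr] at this
      have h1 : h (x k) ≤ h (x N) := hanti hk
      have h2 : L ≤ h (x m) := hLle m
      rw [le_div_iff₀ hσ]
      nlinarith [dist_nonneg (x := x m) (y := x k)]
    · have : Tendsto (fun N => (h (x N) - L) / σ) atTop (𝓝 ((L - L)/σ)) :=
        (hLtend.sub tendsto_const_nhds).div_const σ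
      simpa using this
  obtain ⟨w, hw⟩ := cauchySeq_tendsto_of_complete hcauchy
  have hwr : ∀ k, h w + σ * dist w (x k) ≤ h (x k) := by
    intro k
    have htend : Tendsto (fun m => h (x m) + σ * dist (x m) (x k)) atTop
        (𝓝 (h w + σ * dist w (x k))) := by
      exact ((hc.continuousAt.tendsto.comp hw).add
        (((continuous_id.dist continuous_const).continuousAt.tendsto.comp hw).const_mul σ))
    apply le_of_tendsto htend
    filter_upwards [eventually_ge_atTop k] with m hm
    exact hchain k m hm
  have hwz : h w = 0 := by
    by_contra hne
    have hpos : 0 < h w := lt_of_le_of_ne (h0 w) (Ne.symm hne)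
    obtain ⟨w', hw'⟩ := hD w hpos
    have hww' : ∀ k, r w' (x k) := by
      intro k
      refine htrans _ _ _ (le_of_lt hw') (hwr k)
    have hkey : ∀ k : ℕ, h w ≤ h w' + (1/2)^k := by
      intro k
      have h1 : sInf (h '' {y | r y (x k)}) ≤ h w' :=
        csInf_le (hbdd (x k)) ⟨w', hww' k, rfl⟩
      have h2 := (hxs k).2
      have h3 := hwr (k+1)
      have h4 : 0 ≤ σ * dist w (x (k+1)) := by positivity
      linarith
    have ht2 : Tendsto (fun k : ℕ => h w' + (1/2)^k) atTop (𝓝 (h w' + 0)) :=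
      tendsto_const_nhds.add (tendsto_pow_atTop_nhds_zero_of_lt_one (by norm_num) (by norm_num))
    have hlim : h w ≤ h w' + 0 := ge_of_tendsto' ht2 hkey
    nlinarith [dist_nonneg (x := w') (y := w)]
  refine ⟨w, hwz, ?_⟩
  have := hwr 0
  rw [hx0, dist_comm] at this
  linarith

private lemma pl_descent {n : ℕ} (μ : ℝ) (hμ : 0 < μ)
    (g : EuclideanSpace ℝ (Fin n) → ℝ) (gStar : ℝ)
    (hdiff : Differentiable ℝ g)
    (hsup : IsLUB (Set.range g) gStar)
    (hPL : ∀ z, μ * (gStar - g z) ≤ (1 / 2) * ‖gradient g z‖ ^ 2)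
    (σ : ℝ) (hσ0 : 0 < σ) (hσ : σ < Real.sqrt (μ/2)) :
    ∀ w, 0 < Real.sqrt (gStar - g w) →
      ∃ w', Real.sqrt (gStar - g w') + σ * dist w' w < Real.sqrt (gStar - g w) := by
  intro w hw
  set σ' := Real.sqrt (μ/2) with hσ'
  have hσ'pos : 0 < σ' := lt_trans hσ0 hσ
  have hσ'sq : σ' ^ 2 = μ / 2 := Real.sq_sqrt (by positivity)
  set s := Real.sqrt (gStar - g w) with hs
  have hfw : 0 < gStar - g w := by
    by_contra hle
    push_neg at hle
    have h0 : s = 0 := Real.sqrt_eq_zero'.mpr hle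
    rw [h0] at hw; exact lt_irrefl 0 hw
  have hsq : s ^ 2 = gStar - g w := Real.sq_sqrt hfw.le
  set G := gradient g w with hG
  have hPLw := hPL w
  have hGkey : (2*σ'*s)^2 ≤ ‖G‖^2 := by nlinarith [hσ'sq, hsq]
  have hGnorm : 2*σ'*s ≤ ‖G‖ := by
    nlinarith [norm_nonneg G, mul_pos (mul_pos two_pos hσ'pos) hw]
  have hGpos : 0 < ‖G‖ := lt_of_lt_of_le (by positivity) hGnorm
  have hGne : G ≠ 0 := by
    intro h0; rw [h0, norm_zero] at hGpos; exact lt_irrefl _ hGpos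
  set v := ‖G‖⁻¹ • G with hv
  have hvnorm : ‖v‖ = 1 := norm_smul_inv_norm hGne
  have hline : HasDerivAt (fun t : ℝ => w + t • v) v 0 := by
    simpa using ((hasDerivAt_id (0:ℝ)).smul_const v).const_add w
  have hφ : HasDerivAt (fun t : ℝ => g (w + t • v)) ‖G‖ 0 := by
    have hg : HasFDerivAt g (toDual ℝ _ G) w := (hdiff w).hasGradientAt.hasFDerivAt
    have h0 : w + (0:ℝ) • v = w := by simp
    rw [← h0] at hg
    have hcomp := hg.comp_hasDerivAt 0 hline
    have hval : (toDual ℝ _ G) v = ‖G‖ := by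
      rw [toDual_apply_apply, hv, real_inner_smul_right, real_inner_self_eq_norm_sq]
      field_simp
    rwa [hval] at hcomp
  set a := (σ + σ') * s with ha
  have haG : a < ‖G‖ := by nlinarith
  have hslope := hasDerivAt_iff_tendsto_slope.mp hφ
  have hmono : 𝓝[>] (0:ℝ) ≤ 𝓝[≠] (0:ℝ) :=
    nhdsWithin_mono 0 (fun t ht => ne_of_gt ht)
  have hev : ∀ᶠ t in 𝓝[>] (0:ℝ), a < slope (fun t => g (w + t • v)) 0 t :=
    (hslope.eventually (eventually_gt_nhds haG)).filter_mono hmono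
  have hev2 : ∀ᶠ t in 𝓝[>] (0:ℝ), t < s / σ :=
    (eventually_lt_nhds (by positivity : (0:ℝ) < s / σ)).filter_mono nhdsWithin_le_nhds
  have hev3 : ∀ᶠ t in 𝓝[>] (0:ℝ), 0 < t := eventually_mem_nhdsWithin
  obtain ⟨t, hts, htc, htpos⟩ := (hev.and (hev2.and hev3)).exists
  refine ⟨w + t • v, ?_⟩
  have hdist : dist (w + t • v) w = t := by
    rw [dist_eq_norm]
    simp [norm_smul, hvnorm, abs_of_pos htpos]
  have hgt : (σ + σ') * s * t < g (w + t • v) - g w := by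
    rw [slope_def_field] at hts
    simp only [sub_zero] at hts
    have h00 : g (w + (0:ℝ) • v) = g w := by simp
    rw [h00, lt_div_iff₀ htpos] at hts
    rw [ha] at hts
    linarith
  have hfw' : 0 ≤ gStar - g (w + t • v) := by
    have := hsup.1 (Set.mem_range_self (w + t • v)); linarith
  rw [hdist]
  have hσt : σ * t < s := by
    have := (lt_div_iff₀ hσ0).mp htc
    linarith
  have hpos2 : 0 < s - σ * t := by linarith
  have hmain : Real.sqrt (gStar - g (w + t • v)) < s - σ * t := by
    rw [Real.sqrt_lt' hpos2]
    nlinarith [hgt, hsq, mul_nonneg (mul_nonneg (sub_nonneg.mpr hσ.le) hw.le) htpos.le,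
      sq_nonneg (σ * t)]
  linarith


/-- PL implies quadratic growth: if `g` is differentiable, its supremum
`g*` is finite, the set of maximizers `S = {z : g z = g*}` is nonempty, and `g` satisfies
the `μ`-PL condition `(1/2)‖∇g(z)‖² ≥ μ(g* − g(z))`, then for every `z`,
`g* − g(z) ≥ (μ/2)·dist(z, S)²`. -/
theorem stmt2 {n : ℕ} (μ : ℝ) (hμ : 0 < μ)
    (g : EuclideanSpace ℝ (Fin n) → ℝ) (gStar : ℝ)
    (hdiff : Differentiable ℝ g)
    (hsup : IsLUB (Set.range g) gStar)
    (hS : {z : EuclideanSpace ℝ (Fin n) | g z = gStar}.Nonempty)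
    (hPL : ∀ z, μ * (gStar - g z) ≤ (1 / 2) * ‖gradient g z‖ ^ 2) :
    ∀ z, (μ / 2) * (Metric.infDist z {z' : EuclideanSpace ℝ (Fin n) | g z' = gStar}) ^ 2
      ≤ gStar - g z := by
  intro z
  set S := {z' : EuclideanSpace ℝ (Fin n) | g z' = gStar} with hSdef
  have hge : ∀ u, g u ≤ gStar := fun u => hsup.1 (Set.mem_range_self u)
  set h : EuclideanSpace ℝ (Fin n) → ℝ := fun u => Real.sqrt (gStar - g u) with hh
  have hc : Continuous h := (continuous_const.sub hdiff.continuous).sqrt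
  have h0 : ∀ u, 0 ≤ h u := fun u => Real.sqrt_nonneg _
  set σ' := Real.sqrt (μ/2) with hσ'
  have hσ'pos : 0 < σ' := Real.sqrt_pos.mpr (by positivity)
  set d := Metric.infDist z S with hd
  have hd0 : 0 ≤ d := Metric.infDist_nonneg
  have key : ∀ σ, 0 < σ → σ < σ' → σ * d ≤ h z := by
    intro σ hσ0 hσ
    obtain ⟨w, hw0, hwd⟩ := ekeland_aux h hc h0 σ hσ0
      (pl_descent μ hμ g gStar hdiff hsup hPL σ hσ0 hσ) z
    have hwS : w ∈ S := by
      have h1 : gStar - g w ≤ 0 := Real.sqrt_eq_zero'.mp hw0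
      have h2 := hge w
      simp only [hSdef, Set.mem_setOf_eq]
      linarith
    have hdd : d ≤ dist z w := Metric.infDist_le_dist_of_mem hwS
    calc σ * d ≤ σ * dist z w := by nlinarith
      _ ≤ h z := hwd
  have hfin : σ' * d ≤ h z := by
    by_contra hcon
    push_neg at hcon
    have hdpos : 0 < d := by
      rcases eq_or_lt_of_le hd0 with heq | hlt
      · rw [← heq, mul_zero] at hcon
        exact absurd hcon (not_lt.mpr (h0 z))
      · exact hlt
    have hdiv : h z / d < σ' := by
      rw [div_lt_iff₀ hdpos]
      nlinarith
    obtain ⟨σ, hσ1, hσ2⟩ := exists_between hdiv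
    have hσpos : 0 < σ := lt_of_le_of_lt (div_nonneg (h0 z) hd0) hσ1
    have hk := key σ hσpos hσ2
    rw [div_lt_iff₀ hdpos] at hσ1
    linarith
  have hfz : 0 ≤ gStar - g z := by linarith [hge z]
  have h2 : (h z)^2 = gStar - g z := Real.sq_sqrt hfz
  have h3 : σ'^2 = μ/2 := Real.sq_sqrt (by positivity)
  calc (μ/2) * d^2 = (σ' * d)^2 := by rw [mul_pow, h3]
    _ ≤ (h z)^2 := by nlinarith [mul_nonneg hσ'pos.le hd0, h0 z]
    _ = gStar - g z := h2
end

section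
/- For any N ∈ ℕ and any nonnegative real numbers a₁, …, a_N, one has ∑_{k=1}^{N} a_k / (1/2 + ∑_{t=1}^{k} a_t) ≤ ln(1 + 2·∑_{k=1}^{N} a_k). -/
lemma aux_log (b s : ℝ) (hb : 0 < b) (hbs : b ≤ s) :
    (s - b) / s ≤ Real.log s - Real.log b := by
  have hs : 0 < s := lt_of_lt_of_le hb hbs
  have h := Real.log_le_sub_one_of_pos (show 0 < b / s from div_pos hb hs)
  rw [Real.log_div (ne_of_gt hb) (ne_of_gt hs)] at h
  have : (s - b) / s = 1 - b / s := by field_simp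
  linarith

lemma aux_tele (N : ℕ) (a : ℕ → ℝ) (ha : ∀ k < N, 0 ≤ a k) :
    ∑ k ∈ Finset.range N, a k / (1 / 2 + ∑ t ∈ Finset.range (k + 1), a t)
      ≤ Real.log (1 / 2 + ∑ k ∈ Finset.range N, a k) - Real.log (1 / 2) := by
  induction N with
  | zero => simp
  | succ n ih =>
    have ha' : ∀ k < n, 0 ≤ a k := fun k hk => ha k (hk.trans (Nat.lt_succ_self n))
    have hsum : ∀ m, m ≤ n + 1 → 0 ≤ ∑ t ∈ Finset.range m, a t := by
      intro m hm
      apply Finset.sum_nonneg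
      intro t ht
      exact ha t (lt_of_lt_of_le (Finset.mem_range.mp ht) hm)
    rw [Finset.sum_range_succ, Finset.sum_range_succ (f := a)]
    have hb : (0:ℝ) < 1 / 2 + ∑ t ∈ Finset.range n, a t := by
      have := hsum n (Nat.le_succ n); linarith
    have han : 0 ≤ a n := ha n (Nat.lt_succ_self n)
    have key : a n / (1 / 2 + (∑ t ∈ Finset.range n, a t + a n))
        ≤ Real.log (1 / 2 + (∑ t ∈ Finset.range n, a t + a n))
          - Real.log (1 / 2 + ∑ t ∈ Finset.range n, a t) := by
      have := aux_log (1 / 2 + ∑ t ∈ Finset.range n, a t)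
        (1 / 2 + (∑ t ∈ Finset.range n, a t + a n)) hb (by linarith)
      have heq : (1 / 2 + (∑ t ∈ Finset.range n, a t + a n))
          - (1 / 2 + ∑ t ∈ Finset.range n, a t) = a n := by ring
      rw [heq] at this
      exact this
    have := ih ha'
    linarith

/-- concavity-of-log summation bound, cf. Lemma 4 of Cutkosky–Orabona:
for nonnegative reals `a₁, …, a_N`,
`∑_{k=1}^{N} a_k / (1/2 + ∑_{t=1}^{k} a_t) ≤ ln(1 + 2 ∑_{k=1}^{N} a_k)`.
Here the sequence is indexed from `0`, so `Finset.range N` plays the role of `{1,…,N}`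
and `Finset.range (k+1)` the role of `{1,…,k}`. -/
theorem stmt3 (N : ℕ) (a : ℕ → ℝ) (ha : ∀ k < N, 0 ≤ a k) :
    ∑ k ∈ Finset.range N, a k / (1 / 2 + ∑ t ∈ Finset.range (k + 1), a t)
      ≤ Real.log (1 + 2 * ∑ k ∈ Finset.range N, a k) := by
  have h := aux_tele N a ha
  have hs : 0 ≤ ∑ k ∈ Finset.range N, a k :=
    Finset.sum_nonneg fun k hk => ha k (Finset.mem_range.mp hk)
  have heq : Real.log (1 + 2 * ∑ k ∈ Finset.range N, a k)
      = Real.log (1 / 2 + ∑ k ∈ Finset.range N, a k) - Real.log (1 / 2) := by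
    rw [← Real.log_div (by linarith) (by norm_num)]
    congr 1
    ring
  linarith [heq ▸ h]
end

section
/- Let g₁, …, g_N ∈ ℝ^d be arbitrary vectors and Ĝ > 0. For each k ∈ {1,…,N} and coordinate i ∈ {1,…,d} define h_{k,i} = (1/(2Ĝ²))·∑_{t=1}^{k} g_{t,i}². Then ∑_{k=1}^{N} ∑_{i=1}^{d} g_{k,i}² / (h_{k,i} + 1/2) ≤ 2Ĝ² · ∑_{i=1}^{d} ln(1 + (1/Ĝ²)·∑_{k=1}^{N} g_{k,i}²). -/
lemma aux_log_s4 (c a : ℝ) (hc : 0 < c) (ha : 0 ≤ a) :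
    a / (c + a) ≤ Real.log (c + a) - Real.log c := by
  have hca : 0 < c + a := by linarith
  have h := Real.log_le_sub_one_of_pos (x := c / (c + a)) (by positivity)
  have hlt : Real.log (c / (c + a)) = Real.log c - Real.log (c + a) :=
    Real.log_div hc.ne' hca.ne'
  rw [hlt] at h
  have : c / (c + a) - 1 = -(a / (c + a)) := by field_simp; ring
  linarith [this ▸ h]

lemma aux_sum (N : ℕ) (a : ℕ → ℝ) (ha : ∀ k, 0 ≤ a k) (c : ℝ) (hc : 0 < c) :
    ∑ k ∈ Finset.range N, a k / (c + ∑ t ∈ Finset.range (k + 1), a t)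
      ≤ Real.log (c + ∑ t ∈ Finset.range N, a t) - Real.log c := by
  induction N with
  | zero => simp
  | succ n ih =>
    rw [Finset.sum_range_succ, Finset.sum_range_succ (f := a)]
    have hS : 0 ≤ ∑ t ∈ Finset.range n, a t := Finset.sum_nonneg fun t _ => ha t
    have key := aux_log_s4 (c + ∑ t ∈ Finset.range n, a t) (a n) (by linarith) (ha n)
    rw [← add_assoc]
    linarith

/-- cumulative adaptive gradient bound: for vectors `g₁,…,g_N ∈ ℝ^d`
and `Ĝ > 0`, with `h_{k,i} = (1/(2Ĝ²)) ∑_{t=1}^{k} g_{t,i}²`,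
`∑_{k=1}^{N} ∑_{i=1}^{d} g_{k,i}² / (h_{k,i} + 1/2)
  ≤ 2Ĝ² ∑_{i=1}^{d} ln(1 + (1/Ĝ²) ∑_{k=1}^{N} g_{k,i}²)`.
Here vectors and coordinates are indexed from `0` via `Finset.range`. -/
theorem stmt4 (N d : ℕ) (g : ℕ → ℕ → ℝ) (Ghat : ℝ) (hG : 0 < Ghat) :
    ∑ k ∈ Finset.range N, ∑ i ∈ Finset.range d,
      (g k i) ^ 2 / ((1 / (2 * Ghat ^ 2)) * (∑ t ∈ Finset.range (k + 1), (g t i) ^ 2) + 1 / 2)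
    ≤ 2 * Ghat ^ 2 * ∑ i ∈ Finset.range d,
        Real.log (1 + (1 / Ghat ^ 2) * ∑ k ∈ Finset.range N, (g k i) ^ 2) := by
  have hG2 : 0 < Ghat ^ 2 := by positivity
  rw [Finset.sum_comm, Finset.mul_sum]
  apply Finset.sum_le_sum
  intro i _
  have key := aux_sum N (fun k => (g k i) ^ 2) (fun k => sq_nonneg _) (Ghat ^ 2) hG2
  have hlog : Real.log (1 + (1 / Ghat ^ 2) * ∑ k ∈ Finset.range N, (g k i) ^ 2)
      = Real.log (Ghat ^ 2 + ∑ t ∈ Finset.range N, (g t i) ^ 2) - Real.log (Ghat ^ 2) := by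
    have hS : 0 ≤ ∑ t ∈ Finset.range N, (g t i) ^ 2 :=
      Finset.sum_nonneg fun t _ => sq_nonneg _
    rw [← Real.log_div (by positivity) hG2.ne']
    congr 1
    field_simp
  rw [hlog]
  have heq : ∀ k, (g k i) ^ 2 / ((1 / (2 * Ghat ^ 2)) * (∑ t ∈ Finset.range (k + 1), (g t i) ^ 2) + 1 / 2)
      = 2 * Ghat ^ 2 * ((g k i) ^ 2 / (Ghat ^ 2 + ∑ t ∈ Finset.range (k + 1), (g t i) ^ 2)) := by
    intro k
    have hS : 0 ≤ ∑ t ∈ Finset.range (k + 1), (g t i) ^ 2 :=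
      Finset.sum_nonneg fun t _ => sq_nonneg _
    have hden : 0 < Ghat ^ 2 + ∑ t ∈ Finset.range (k + 1), (g t i) ^ 2 := by linarith
    field_simp
    ring
  calc ∑ k ∈ Finset.range N, (g k i) ^ 2 / ((1 / (2 * Ghat ^ 2)) * (∑ t ∈ Finset.range (k + 1), (g t i) ^ 2) + 1 / 2)
      = 2 * Ghat ^ 2 * ∑ k ∈ Finset.range N, (g k i) ^ 2 / (Ghat ^ 2 + ∑ t ∈ Finset.range (k + 1), (g t i) ^ 2) := by
        rw [Finset.mul_sum]; exact Finset.sum_congr rfl fun k _ => heq k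
    _ ≤ 2 * Ghat ^ 2 * (Real.log (Ghat ^ 2 + ∑ t ∈ Finset.range N, (g t i) ^ 2) - Real.log (Ghat ^ 2)) := by
        apply mul_le_mul_of_nonneg_left key (by positivity)
end

section
/- Let L : ℝ^{d₁} × ℝ^{d₂} → ℝ be differentiable with C-Lipschitz gradient. Suppose for each ω the supremum Φ(ω) = sup_z L(ω,z) is attained at some f*(ω), that ∇Φ(ω) = ∇_ω L(ω, f*(ω)), and that the quadratic-growth bound ‖f*(ω) − z‖² ≤ (2/μ)(Φ(ω) − L(ω,z)) holds for all ω, z (μ > 0). Then for any ω, ω̂ ∈ ℝ^{d₁}, ẑ ∈ ℝ^{d₂} and any vector g ∈ ℝ^{d₁}: ‖∇Φ(ω) − g‖² ≤ (6C²/μ)(Φ(ω) − L(ω, ẑ)) + 3C²‖ω − ω̂‖² + 3‖g − ∇_ω L(ω̂, ẑ)‖². -/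
/-- Partial gradient of `L` with respect to the first block of variables. -/
noncomputable def gradFst {d₁ d₂ : ℕ}
    (L : EuclideanSpace ℝ (Fin d₁) → EuclideanSpace ℝ (Fin d₂) → ℝ)
    (ω : EuclideanSpace ℝ (Fin d₁)) (z : EuclideanSpace ℝ (Fin d₂)) :
    EuclideanSpace ℝ (Fin d₁) :=
  gradient (fun w => L w z) ω

/-- Partial gradient of `L` with respect to the second block of variables. -/
noncomputable def gradSnd {d₁ d₂ : ℕ}
    (L : EuclideanSpace ℝ (Fin d₁) → EuclideanSpace ℝ (Fin d₂) → ℝ)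
    (ω : EuclideanSpace ℝ (Fin d₁)) (z : EuclideanSpace ℝ (Fin d₂)) :
    EuclideanSpace ℝ (Fin d₂) :=
  gradient (fun y => L ω y) z

/-- gradient error decomposition: if `L` has a `C`-Lipschitz full
gradient, the envelope `Φ(ω) = sup_z L(ω,z)` is attained at `f*(ω)` with
`∇Φ(ω) = ∇_ω L(ω, f*(ω))`, and the quadratic-growth bound
`‖f*(ω) − z‖² ≤ (2/μ)(Φ(ω) − L(ω,z))` holds, then for any `ω, ω̂, ẑ, g`:
`‖∇Φ(ω) − g‖² ≤ (6C²/μ)(Φ(ω) − L(ω, ẑ)) + 3C²‖ω − ω̂‖² + 3‖g − ∇_ω L(ω̂, ẑ)‖²`. -/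
theorem stmt6 {d₁ d₂ : ℕ} (C μ : ℝ) (hμ : 0 < μ)
    (L : EuclideanSpace ℝ (Fin d₁) → EuclideanSpace ℝ (Fin d₂) → ℝ)
    (Φ : EuclideanSpace ℝ (Fin d₁) → ℝ)
    (fstar : EuclideanSpace ℝ (Fin d₁) → EuclideanSpace ℝ (Fin d₂))
    (hdiff : Differentiable ℝ
      (fun p : EuclideanSpace ℝ (Fin d₁) × EuclideanSpace ℝ (Fin d₂) => L p.1 p.2))
    (hLip : ∀ (ω : EuclideanSpace ℝ (Fin d₁)) (z : EuclideanSpace ℝ (Fin d₂))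
        (ω' : EuclideanSpace ℝ (Fin d₁)) (z' : EuclideanSpace ℝ (Fin d₂)),
      Real.sqrt (‖gradFst L ω z - gradFst L ω' z'‖ ^ 2 + ‖gradSnd L ω z - gradSnd L ω' z'‖ ^ 2)
        ≤ C * Real.sqrt (‖ω - ω'‖ ^ 2 + ‖z - z'‖ ^ 2))
    (hattain : ∀ ω z, L ω z ≤ L ω (fstar ω))
    (hΦ : ∀ ω, Φ ω = L ω (fstar ω))
    (hgradΦ : ∀ ω, gradient Φ ω = gradFst L ω (fstar ω))
    (hQG : ∀ ω z, ‖fstar ω - z‖ ^ 2 ≤ (2 / μ) * (Φ ω - L ω z)) :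
    ∀ (ω ωhat : EuclideanSpace ℝ (Fin d₁)) (zhat : EuclideanSpace ℝ (Fin d₂))
      (g : EuclideanSpace ℝ (Fin d₁)),
      ‖gradient Φ ω - g‖ ^ 2
        ≤ (6 * C ^ 2 / μ) * (Φ ω - L ω zhat) + 3 * C ^ 2 * ‖ω - ωhat‖ ^ 2
          + 3 * ‖g - gradFst L ωhat zhat‖ ^ 2 := by
  -- auxiliary: squared Lipschitz bound on gradFst
  have key : ∀ (w : EuclideanSpace ℝ (Fin d₁)) (z : EuclideanSpace ℝ (Fin d₂))
      (w' : EuclideanSpace ℝ (Fin d₁)) (z' : EuclideanSpace ℝ (Fin d₂)),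
      ‖gradFst L w z - gradFst L w' z'‖ ^ 2 ≤ C ^ 2 * (‖w - w'‖ ^ 2 + ‖z - z'‖ ^ 2) := by
    intro w z w' z'
    have h1 : ‖gradFst L w z - gradFst L w' z'‖ ≤
        Real.sqrt (‖gradFst L w z - gradFst L w' z'‖ ^ 2 + ‖gradSnd L w z - gradSnd L w' z'‖ ^ 2) := by
      calc ‖gradFst L w z - gradFst L w' z'‖
          = Real.sqrt (‖gradFst L w z - gradFst L w' z'‖ ^ 2) :=
            (Real.sqrt_sq (norm_nonneg _)).symm
        _ ≤ _ := Real.sqrt_le_sqrt (le_add_of_nonneg_right (sq_nonneg _))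
    have h2 := (h1.trans (hLip w z w' z'))
    have h3 : ‖gradFst L w z - gradFst L w' z'‖ ^ 2 ≤
        (C * Real.sqrt (‖w - w'‖ ^ 2 + ‖z - z'‖ ^ 2)) ^ 2 :=
      pow_le_pow_left₀ (norm_nonneg _) h2 2
    calc ‖gradFst L w z - gradFst L w' z'‖ ^ 2 ≤
        (C * Real.sqrt (‖w - w'‖ ^ 2 + ‖z - z'‖ ^ 2)) ^ 2 := h3
      _ = C ^ 2 * (‖w - w'‖ ^ 2 + ‖z - z'‖ ^ 2) := by
          rw [mul_pow, Real.sq_sqrt (by positivity)]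
  intro ω ωhat zhat g
  set a := gradFst L ω (fstar ω) - gradFst L ω zhat with ha
  set b := gradFst L ω zhat - gradFst L ωhat zhat with hb
  set c := gradFst L ωhat zhat - g with hc
  have hsum : gradient Φ ω - g = a + b + c := by
    rw [hgradΦ ω, ha, hb, hc]; abel
  have hna : ‖a‖ ^ 2 ≤ C ^ 2 * ‖fstar ω - zhat‖ ^ 2 := by
    have := key ω (fstar ω) ω zhat
    simpa using this
  have hna' : ‖a‖ ^ 2 ≤ C ^ 2 * ((2 / μ) * (Φ ω - L ω zhat)) :=
    hna.trans (by
      have := hQG ω zhat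
      nlinarith [sq_nonneg C])
  have hnb : ‖b‖ ^ 2 ≤ C ^ 2 * ‖ω - ωhat‖ ^ 2 := by
    have := key ω zhat ωhat zhat
    simpa using this
  have hnc : ‖c‖ = ‖g - gradFst L ωhat zhat‖ := norm_sub_rev _ _
  have htri : ‖gradient Φ ω - g‖ ≤ ‖a‖ + ‖b‖ + ‖c‖ := by
    rw [hsum]
    exact (norm_add_le _ _).trans (by gcongr; exact norm_add_le _ _)
  have hsq : ‖gradient Φ ω - g‖ ^ 2 ≤ 3 * (‖a‖ ^ 2 + ‖b‖ ^ 2 + ‖c‖ ^ 2) := by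
    nlinarith [norm_nonneg (gradient Φ ω - g), norm_nonneg a, norm_nonneg b, norm_nonneg c,
      sq_nonneg (‖a‖ - ‖b‖), sq_nonneg (‖a‖ - ‖c‖), sq_nonneg (‖b‖ - ‖c‖)]
  rw [← hnc]
  calc ‖gradient Φ ω - g‖ ^ 2 ≤ 3 * (‖a‖ ^ 2 + ‖b‖ ^ 2 + ‖c‖ ^ 2) := hsq
    _ ≤ 3 * (C ^ 2 * ((2 / μ) * (Φ ω - L ω zhat)) + C ^ 2 * ‖ω - ωhat‖ ^ 2 + ‖c‖ ^ 2) := by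
        gcongr
    _ = (6 * C ^ 2 / μ) * (Φ ω - L ω zhat) + 3 * C ^ 2 * ‖ω - ωhat‖ ^ 2 + 3 * ‖c‖ ^ 2 := by
        field_simp; ring
end

section
/- Let L : ℝ^{d₁} × ℝ^{d₂} → ℝ be differentiable with C-Lipschitz gradient; suppose for each ω the supremum Φ(ω) = sup_z L(ω,z) is attained at f*(ω), that ∇Φ(ω) = ∇_ω L(ω, f*(ω)), that the quadratic-growth bound ‖f*(ω) − z‖² ≤ (2/μ)(Φ(ω) − L(ω,z)) holds for all ω, z (μ > 0), and that Φ has β-Lipschitz gradient. Let 0 < η ≤ 1/β, let z̃ ∈ ℝ^{d₂}, let g_i, m_i ∈ ℝ^{d₁} for i = 1, …, A be arbitrary, and let ω̄' = ω̄ − (η/A)∑_{i=1}^{A}(g_i + m_i). Then Φ(ω̄') − Φ(ω̄) ≤ (3ηC²/μ)(Φ(ω̄) − L(ω̄, z̃)) + (3η/(2A))∑_{i=1}^{A} ‖∇_ω L(ω̄, z̃) − g_i‖² + (3η/(2A))∑_{i=1}^{A} ‖m_i‖² − (η/2)‖∇Φ(ω̄)‖². -/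
open scoped RealInnerProductSpace

lemma descent_lemma {n : ℕ} (Φ : EuclideanSpace ℝ (Fin n) → ℝ) (β : ℝ)
    (hΦdiff : Differentiable ℝ Φ)
    (hΦLip : ∀ x y, ‖gradient Φ x - gradient Φ y‖ ≤ β * ‖x - y‖)
    (x d : EuclideanSpace ℝ (Fin n)) :
    Φ (x + d) ≤ Φ x + ⟪gradient Φ x, d⟫ + β / 2 * ‖d‖ ^ 2 := by
  have hφ : ∀ t : ℝ, HasDerivAt (fun t : ℝ => Φ (x + t • d))
      ⟪gradient Φ (x + t • d), d⟫ t := by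
    intro t
    have hc : HasDerivAt (fun t : ℝ => x + t • d) d t :=
      by simpa using ((hasDerivAt_id t).smul_const d).const_add x
    have h1 := (hΦdiff (x + t • d)).hasGradientAt
    have h2 := hasGradientAt_iff_hasFDerivAt.mp h1
    have h3 := h2.comp_hasDerivAt t hc
    simpa [InnerProductSpace.toDual_apply_apply, Function.comp_def] using h3
  set ψ : ℝ → ℝ := fun t =>
    Φ (x + t • d) - t * ⟪gradient Φ x, d⟫ - β * ‖d‖ ^ 2 / 2 * t ^ 2 with hψdef
  have hψ : ∀ t : ℝ, HasDerivAt ψ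
      (⟪gradient Φ (x + t • d), d⟫ - ⟪gradient Φ x, d⟫ - β * ‖d‖ ^ 2 * t) t := by
    intro t
    have h1 : HasDerivAt (fun t : ℝ => t * ⟪gradient Φ x, d⟫) ⟪gradient Φ x, d⟫ t :=
      by simpa using (hasDerivAt_id t).mul_const ⟪gradient Φ x, d⟫
    have h2 : HasDerivAt (fun t : ℝ => β * ‖d‖ ^ 2 / 2 * t ^ 2) (β * ‖d‖ ^ 2 * t) t := by
      have := (hasDerivAt_pow 2 t).const_mul (β * ‖d‖ ^ 2 / 2)
      exact this.congr_deriv (by norm_num; ring)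
    exact ((hφ t).sub h1).sub h2
  have hkey : ψ 1 ≤ ψ 0 := by
    have hanti : AntitoneOn ψ (Set.Icc (0:ℝ) 1) := by
      apply antitoneOn_of_deriv_nonpos (convex_Icc 0 1)
      · exact fun t _ => ((hψ t).continuousAt).continuousWithinAt
      · exact fun t _ => ((hψ t).differentiableAt).differentiableWithinAt
      · intro t ht
        rw [interior_Icc] at ht
        rw [(hψ t).deriv]
        have hin : ⟪gradient Φ (x + t • d) - gradient Φ x, d⟫
            ≤ β * ‖d‖ ^ 2 * t := by
          calc ⟪gradient Φ (x + t • d) - gradient Φ x, d⟫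
              ≤ ‖gradient Φ (x + t • d) - gradient Φ x‖ * ‖d‖ := real_inner_le_norm _ _
            _ ≤ (β * ‖x + t • d - x‖) * ‖d‖ := by
                apply mul_le_mul_of_nonneg_right (hΦLip _ _) (norm_nonneg _)
            _ = β * ‖d‖ ^ 2 * t := by
                rw [add_sub_cancel_left, norm_smul, Real.norm_eq_abs,
                  abs_of_pos ht.1]
                ring
        have : ⟪gradient Φ (x + t • d), d⟫ - ⟪gradient Φ x, d⟫
            = ⟪gradient Φ (x + t • d) - gradient Φ x, d⟫ := by
          rw [inner_sub_left]
        rw [this]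
        linarith
    exact hanti (Set.mem_Icc.mpr ⟨le_refl 0, zero_le_one⟩)
      (Set.mem_Icc.mpr ⟨zero_le_one, le_refl 1⟩) zero_le_one
  simp only [hψdef, one_smul, zero_smul, add_zero, one_mul, zero_mul, one_pow,
    zero_pow, mul_zero, sub_zero] at hkey
  linarith

set_option maxHeartbeats 1000000 in
/-- multi-agent averaged descent step: under the envelope /
quadratic-growth hypotheses and `β`-smoothness of `Φ`, with `0 < η ≤ 1/β` and the averaged
update `ω̄' = ω̄ − (η/A)∑ᵢ(gᵢ + mᵢ)`,
`Φ(ω̄') − Φ(ω̄) ≤ (3ηC²/μ)(Φ(ω̄) − L(ω̄, z̃)) + (3η/(2A))∑ᵢ‖∇_ω L(ω̄, z̃) − gᵢ‖²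
  + (3η/(2A))∑ᵢ‖mᵢ‖² − (η/2)‖∇Φ(ω̄)‖²`. -/
theorem stmt18 {d₁ d₂ : ℕ} (C μ β η : ℝ) (hμ : 0 < μ) (A : ℕ) (hA : 0 < A)
    (L : EuclideanSpace ℝ (Fin d₁) → EuclideanSpace ℝ (Fin d₂) → ℝ)
    (Φ : EuclideanSpace ℝ (Fin d₁) → ℝ)
    (fstar : EuclideanSpace ℝ (Fin d₁) → EuclideanSpace ℝ (Fin d₂))
    (hdiff : Differentiable ℝ
      (fun p : EuclideanSpace ℝ (Fin d₁) × EuclideanSpace ℝ (Fin d₂) => L p.1 p.2))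
    (hLip : ∀ (ω : EuclideanSpace ℝ (Fin d₁)) (z : EuclideanSpace ℝ (Fin d₂))
        (ω' : EuclideanSpace ℝ (Fin d₁)) (z' : EuclideanSpace ℝ (Fin d₂)),
      Real.sqrt (‖gradFst L ω z - gradFst L ω' z'‖ ^ 2 + ‖gradSnd L ω z - gradSnd L ω' z'‖ ^ 2)
        ≤ C * Real.sqrt (‖ω - ω'‖ ^ 2 + ‖z - z'‖ ^ 2))
    (hattain : ∀ ω z, L ω z ≤ L ω (fstar ω))
    (hΦ : ∀ ω, Φ ω = L ω (fstar ω))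
    (hgradΦ : ∀ ω, gradient Φ ω = gradFst L ω (fstar ω))
    (hQG : ∀ ω z, ‖fstar ω - z‖ ^ 2 ≤ (2 / μ) * (Φ ω - L ω z))
    (hΦdiff : Differentiable ℝ Φ)
    (hΦLip : ∀ x y, ‖gradient Φ x - gradient Φ y‖ ≤ β * ‖x - y‖)
    (hη0 : 0 < η) (hη : η ≤ 1 / β)
    (ztilde : EuclideanSpace ℝ (Fin d₂))
    (g m : Fin A → EuclideanSpace ℝ (Fin d₁))
    (ωbar ωbar' : EuclideanSpace ℝ (Fin d₁))
    (hupd : ωbar' = ωbar - (η / A) • ∑ i, (g i + m i)) :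
    Φ ωbar' - Φ ωbar
      ≤ (3 * η * C ^ 2 / μ) * (Φ ωbar - L ωbar ztilde)
        + (3 * η / (2 * A)) * ∑ i, ‖gradFst L ωbar ztilde - g i‖ ^ 2
        + (3 * η / (2 * A)) * ∑ i, ‖m i‖ ^ 2
        - (η / 2) * ‖gradient Φ ωbar‖ ^ 2 := by
  have hβpos : 0 < β := by
    by_contra h
    push_neg at h
    have : 1 / β ≤ 0 := one_div_nonpos.mpr h
    linarith
  have hApos : (0:ℝ) < (A:ℝ) := Nat.cast_pos.mpr hA
  set G := gradient Φ ωbar with hG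
  set v := (A:ℝ)⁻¹ • ∑ i, (g i + m i) with hv
  have hd : ωbar' = ωbar + (-(η • v)) := by
    rw [hupd, sub_eq_add_neg]
    congr 2
    rw [hv, smul_smul, div_eq_mul_inv]
  -- descent step
  have hdesc := descent_lemma Φ β hΦdiff hΦLip ωbar (-(η • v))
  rw [← hd] at hdesc
  have hβη : η * β ≤ 1 := (le_div_iff₀ hβpos).mp hη
  have hnormsq : ‖-(η • v)‖ ^ 2 = η ^ 2 * ‖v‖ ^ 2 := by
    rw [norm_neg, norm_smul, Real.norm_eq_abs, mul_pow, sq_abs]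
  have hinner : ⟪G, -(η • v)⟫ = -(η * ⟪G, v⟫) := by
    rw [inner_neg_right, real_inner_smul_right]
  rw [hnormsq, hinner] at hdesc
  have hexp : ‖v - G‖ ^ 2 = ‖v‖ ^ 2 - 2 * ⟪v, G⟫ + ‖G‖ ^ 2 := norm_sub_sq_real v G
  have hcomm : ⟪G, v⟫ = ⟪v, G⟫ := (real_inner_comm v G)
  have h1 : Φ ωbar' - Φ ωbar ≤ η / 2 * ‖v - G‖ ^ 2 - η / 2 * ‖G‖ ^ 2 := by
    have hquad : β / 2 * (η ^ 2 * ‖v‖ ^ 2) ≤ η / 2 * ‖v‖ ^ 2 := by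
      nlinarith [sq_nonneg ‖v‖, hη0, hβη]
    nlinarith [hdesc, hquad, hexp, hcomm]
  -- rewrite v - G as an average
  have hvG : v - G = (A:ℝ)⁻¹ • ∑ i, (g i + m i - G) := by
    rw [Finset.sum_sub_distrib, smul_sub, hv]
    congr 1
    rw [Finset.sum_const, Finset.card_univ, Fintype.card_fin,
      ← Nat.cast_smul_eq_nsmul ℝ, smul_smul, inv_mul_cancel₀ (ne_of_gt hApos), one_smul]
  have hnorm1 : ‖v - G‖ ≤ (A:ℝ)⁻¹ * ∑ i, ‖g i + m i - G‖ := by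
    rw [hvG, norm_smul, Real.norm_eq_abs, abs_of_pos (inv_pos.mpr hApos)]
    exact mul_le_mul_of_nonneg_left (norm_sum_le _ _) (inv_pos.mpr hApos).le
  have hcheb : (∑ i, ‖g i + m i - G‖) ^ 2 ≤ (A:ℝ) * ∑ i, ‖g i + m i - G‖ ^ 2 := by
    have h2 := sq_sum_le_card_mul_sum_sq (s := (Finset.univ : Finset (Fin A)))
      (f := fun i => ‖g i + m i - G‖)
    simpa [Finset.card_univ, Fintype.card_fin] using h2
  have hsq : ‖v - G‖ ^ 2 ≤ (A:ℝ)⁻¹ * ∑ i, ‖g i + m i - G‖ ^ 2 := by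
    have hs1 : ‖v - G‖ ^ 2 ≤ ((A:ℝ)⁻¹ * ∑ i, ‖g i + m i - G‖) ^ 2 :=
      pow_le_pow_left₀ (norm_nonneg _) hnorm1 2
    have hs2 : ((A:ℝ)⁻¹ * ∑ i, ‖g i + m i - G‖) ^ 2
        = (A:ℝ)⁻¹ ^ 2 * (∑ i, ‖g i + m i - G‖) ^ 2 := by ring
    have hs3 : (A:ℝ)⁻¹ ^ 2 * (∑ i, ‖g i + m i - G‖) ^ 2
        ≤ (A:ℝ)⁻¹ ^ 2 * ((A:ℝ) * ∑ i, ‖g i + m i - G‖ ^ 2) :=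
      mul_le_mul_of_nonneg_left hcheb (by positivity)
    have hs4 : (A:ℝ)⁻¹ ^ 2 * ((A:ℝ) * ∑ i, ‖g i + m i - G‖ ^ 2)
        = (A:ℝ)⁻¹ * ∑ i, ‖g i + m i - G‖ ^ 2 := by
      field_simp
    linarith
  -- bound the coupling term
  have ha : ‖G - gradFst L ωbar ztilde‖ ^ 2 ≤ C ^ 2 * ((2 / μ) * (Φ ωbar - L ωbar ztilde)) := by
    have hkey := hLip ωbar (fstar ωbar) ωbar ztilde
    have hR : Real.sqrt (‖ωbar - ωbar‖ ^ 2 + ‖fstar ωbar - ztilde‖ ^ 2)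
        = ‖fstar ωbar - ztilde‖ := by
      simp [Real.sqrt_sq (norm_nonneg _)]
    have hL2 : ‖gradFst L ωbar (fstar ωbar) - gradFst L ωbar ztilde‖
        ≤ Real.sqrt (‖gradFst L ωbar (fstar ωbar) - gradFst L ωbar ztilde‖ ^ 2
          + ‖gradSnd L ωbar (fstar ωbar) - gradSnd L ωbar ztilde‖ ^ 2) := by
      apply Real.le_sqrt_of_sq_le
      nlinarith [sq_nonneg ‖gradSnd L ωbar (fstar ωbar) - gradSnd L ωbar ztilde‖]
    rw [hR] at hkey
    have hle : ‖G - gradFst L ωbar ztilde‖ ≤ C * ‖fstar ωbar - ztilde‖ := by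
      rw [hG, hgradΦ]
      exact hL2.trans hkey
    have hsq2 : ‖G - gradFst L ωbar ztilde‖ ^ 2 ≤ C ^ 2 * ‖fstar ωbar - ztilde‖ ^ 2 := by
      nlinarith [norm_nonneg (G - gradFst L ωbar ztilde), hle]
    calc ‖G - gradFst L ωbar ztilde‖ ^ 2 ≤ C ^ 2 * ‖fstar ωbar - ztilde‖ ^ 2 := hsq2
      _ ≤ C ^ 2 * ((2 / μ) * (Φ ωbar - L ωbar ztilde)) :=
          mul_le_mul_of_nonneg_left (hQG ωbar ztilde) (sq_nonneg C)
  -- termwise bound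
  have hterm : ∀ i, ‖g i + m i - G‖ ^ 2
      ≤ 3 * (C ^ 2 * ((2 / μ) * (Φ ωbar - L ωbar ztilde))
        + ‖gradFst L ωbar ztilde - g i‖ ^ 2 + ‖m i‖ ^ 2) := by
    intro i
    set a := G - gradFst L ωbar ztilde with hadef
    set b := gradFst L ωbar ztilde - g i with hbdef
    have heq : g i + m i - G = -(a + b - m i) := by
      rw [hadef, hbdef]; abel
    rw [heq, norm_neg]
    have h3 : ‖a + b - m i‖ ≤ ‖a‖ + ‖b‖ + ‖m i‖ :=
      (norm_sub_le (a + b) (m i)).trans (add_le_add_left (norm_add_le a b) _)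
    have h4 : ‖a + b - m i‖ ^ 2 ≤ (‖a‖ + ‖b‖ + ‖m i‖) ^ 2 :=
      pow_le_pow_left₀ (norm_nonneg _) h3 2
    nlinarith [h4, ha, sq_nonneg (‖a‖ - ‖b‖), sq_nonneg (‖a‖ - ‖m i‖),
      sq_nonneg (‖b‖ - ‖m i‖)]
  have hsum : ∑ i, ‖g i + m i - G‖ ^ 2
      ≤ (A:ℝ) * (3 * (C ^ 2 * ((2 / μ) * (Φ ωbar - L ωbar ztilde))))
        + 3 * ∑ i, ‖gradFst L ωbar ztilde - g i‖ ^ 2 + 3 * ∑ i, ‖m i‖ ^ 2 := by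
    calc ∑ i, ‖g i + m i - G‖ ^ 2
        ≤ ∑ i, (3 * (C ^ 2 * ((2 / μ) * (Φ ωbar - L ωbar ztilde))
          + ‖gradFst L ωbar ztilde - g i‖ ^ 2 + ‖m i‖ ^ 2)) :=
        Finset.sum_le_sum fun i _ => hterm i
      _ = (A:ℝ) * (3 * (C ^ 2 * ((2 / μ) * (Φ ωbar - L ωbar ztilde))))
          + 3 * ∑ i, ‖gradFst L ωbar ztilde - g i‖ ^ 2 + 3 * ∑ i, ‖m i‖ ^ 2 := by
        simp only [mul_add, Finset.sum_add_distrib, Finset.mul_sum, Finset.sum_const,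
          Finset.card_univ, Fintype.card_fin, nsmul_eq_mul]
  -- combine everything
  have hS : ‖v - G‖ ^ 2 ≤ (A:ℝ)⁻¹ * ((A:ℝ) * (3 * (C ^ 2 * ((2 / μ) * (Φ ωbar - L ωbar ztilde))))
        + 3 * ∑ i, ‖gradFst L ωbar ztilde - g i‖ ^ 2 + 3 * ∑ i, ‖m i‖ ^ 2) :=
    hsq.trans (mul_le_mul_of_nonneg_left hsum (inv_pos.mpr hApos).le)
  have hfinal : η / 2 * ((A:ℝ)⁻¹ * ((A:ℝ) * (3 * (C ^ 2 * ((2 / μ) * (Φ ωbar - L ωbar ztilde))))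
        + 3 * ∑ i, ‖gradFst L ωbar ztilde - g i‖ ^ 2 + 3 * ∑ i, ‖m i‖ ^ 2))
      = (3 * η * C ^ 2 / μ) * (Φ ωbar - L ωbar ztilde)
        + (3 * η / (2 * A)) * ∑ i, ‖gradFst L ωbar ztilde - g i‖ ^ 2
        + (3 * η / (2 * A)) * ∑ i, ‖m i‖ ^ 2 := by
    field_simp
  have h2 : η / 2 * ‖v - G‖ ^ 2
      ≤ (3 * η * C ^ 2 / μ) * (Φ ωbar - L ωbar ztilde)
        + (3 * η / (2 * A)) * ∑ i, ‖gradFst L ωbar ztilde - g i‖ ^ 2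
        + (3 * η / (2 * A)) * ∑ i, ‖m i‖ ^ 2 := by
    rw [← hfinal]
    exact mul_le_mul_of_nonneg_left hS (by linarith)
  linarith
end
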